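/- With P self-uncorrelated, p_1 = A, p_n = G, and G_{n,ℓ} defined by G_{n,ℓ} = 3^ℓ for 0 ≤ ℓ < n and G_{n,ℓ} = ∑_{i=1}^{n-1} |P̄_i| G_{n,ℓ-i} for ℓ ≥ n, the number of strings of length ℓ expressible as P^{t_1-1}\bar{p}_{t_1} ⋯ P^{t_r-1}\bar{p}_{t_r} W (with 1 ≤ t_j < n, \bar{p}_{t_j} ∈ P̄_{t_j}, W ∈ {A,T,C}^{t_0}, t_0 < n) is exactly G_{n,ℓ}; i.e., the encoding x ↦ CodePSC(P,ℓ,x) is a bijection from {0,1,...,G_{n,ℓ}−1} to this set of strings. -/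

import Mathlib

inductive Base : Type
  | A | T | G | C
deriving DecidableEq

/-- A word `X` is self-uncorrelated if no proper nonempty prefix of `X`
is also a suffix of `X`. -/
def selfUncorr {α : Type*} (X : List α) : Prop :=
  ∀ k : ℕ, 0 < k → k < X.length → X.take k ≠ X.drop (X.length - k)

/-- `PSFact P L W Z` : `Z` is the codeword `P^{t₁-1} q₁ ⋯ P^{tᵣ-1} qᵣ W` produced by
the prefix-synchronized encoding with block list `L` and terminal word
`W ∈ {A,T,C}^{t₀}`, `t₀ < n`. -/
inductive PSFact (P : List Base) : List (ℕ × Base) → List Base → List Base → Prop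
  | term (W : List Base) (hlen : W.length < P.length)
      (hW : ∀ a ∈ W, a ≠ Base.G) : PSFact P [] W W
  | block (t : ℕ) (q : Base) (L : List (ℕ × Base)) (W Z : List Base)
      (ht1 : 1 ≤ t) (ht2 : t < P.length) (hq : q ≠ Base.G)
      (hq2 : ∀ (h : t - 1 < P.length), q ≠ P.get ⟨t - 1, h⟩)
      (hrem : P.length ≤ t + Z.length)
      (hZ : PSFact P L W Z) : PSFact P ((t, q) :: L) W (P.take (t - 1) ++ q :: Z)

instance : Fintype Base :=
  ⟨{Base.A, Base.T, Base.G, Base.C}, by intro x; cases x <;> simp⟩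

lemma myNcardBiUnion {ι α : Type*} (s : Finset ι) (f : ι → Set α)
    (hf : ∀ i ∈ s, (f i).Finite)
    (hd : ∀ i ∈ s, ∀ j ∈ s, i ≠ j → Disjoint (f i) (f j)) :
    (⋃ i ∈ s, f i).ncard = ∑ i ∈ s, (f i).ncard := by
  classical
  induction s using Finset.induction with
  | empty => simp
  | @insert a s hi ih =>
    rw [Finset.sum_insert hi]
    have h1 : (⋃ i ∈ insert a s, f i) = f a ∪ ⋃ i ∈ s, f i := by simp
    have hfa : (f a).Finite := hf a (Finset.mem_insert_self a s)
    have hfU : (⋃ i ∈ s, f i).Finite :=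
      Set.Finite.biUnion s.finite_toSet fun i hi' => hf i (Finset.mem_insert_of_mem hi')
    have hdisj : Disjoint (f a) (⋃ i ∈ s, f i) := by
      refine Set.disjoint_iUnion₂_right.mpr fun i hi' => ?_
      exact hd a (Finset.mem_insert_self a s) i (Finset.mem_insert_of_mem hi')
        (by rintro rfl; exact hi hi')
    rw [h1, Set.ncard_union_eq hdisj hfa hfU,
      ih (fun i hi' => hf i (Finset.mem_insert_of_mem hi'))
        (fun i hi' j hj' hij =>
          hd i (Finset.mem_insert_of_mem hi') j (Finset.mem_insert_of_mem hj') hij)]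

lemma cardBarG : Fintype.card {b : Base // b ≠ Base.G} = 3 := by decide

lemma countNoG (ℓ : ℕ) :
    Set.ncard {Z : List Base | Z.length = ℓ ∧ ∀ a ∈ Z, a ≠ Base.G} = 3 ^ ℓ := by
  classical
  set f : List.Vector {b : Base // b ≠ Base.G} ℓ → List Base :=
    fun v => v.toList.map Subtype.val with hf
  have hinj : Function.Injective f := by
    intro v w h
    apply List.Vector.eq
    exact List.map_injective_iff.mpr Subtype.val_injective h
  have himg : Set.range f = {Z : List Base | Z.length = ℓ ∧ ∀ a ∈ Z, a ≠ Base.G} := by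
    ext Z
    constructor
    · rintro ⟨v, rfl⟩
      refine ⟨by simp [hf], ?_⟩
      intro a ha
      simp only [hf, List.mem_map] at ha
      obtain ⟨⟨b, hb⟩, _, rfl⟩ := ha
      exact hb
    · rintro ⟨hlen, hZ⟩
      refine ⟨⟨Z.attach.map (fun x => ⟨x.1, hZ x.1 x.2⟩), by simp [hlen]⟩, ?_⟩
      show List.map Subtype.val _ = Z
      rw [List.Vector.toList_mk, List.map_map]
      exact (List.attach_map_val (l := Z) (f := id)).trans (List.map_id Z)
  rw [← himg, ← Set.image_univ, Set.ncard_image_of_injective _ hinj, Set.ncard_univ,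
    Nat.card_eq_fintype_card, card_vector, cardBarG]

def codeSet (P : List Base) (ℓ : ℕ) : Set (List Base) :=
  {Z : List Base | Z.length = ℓ ∧ ∃ L W, PSFact P L W Z}

lemma codeSetFinite (P : List Base) (ℓ : ℕ) : (codeSet P ℓ).Finite :=
  (List.finite_length_eq (Base) ℓ).subset (fun _ hZ => hZ.1)

lemma charLow (P : List Base) (ℓ : ℕ) (hℓ : ℓ < P.length) :
    codeSet P ℓ = {Z : List Base | Z.length = ℓ ∧ ∀ a ∈ Z, a ≠ Base.G} := by
  ext Z
  constructor
  · rintro ⟨hlen, L, W, h⟩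
    refine ⟨hlen, ?_⟩
    cases h with
    | term W hl hW => exact hW
    | block t q L W Z' ht1 ht2 hq hq2 hrem hZ =>
      exfalso
      have h1 : (P.take (t-1)).length = t - 1 := by rw [List.length_take]; omega
      have : (P.take (t-1) ++ q :: Z').length = t + Z'.length := by
        simp [h1]; omega
      omega
  · rintro ⟨hlen, hZ⟩
    exact ⟨hlen, [], Z, PSFact.term Z (by omega) hZ⟩

lemma mismatchAux (P : List Base) (t t' : ℕ) (q q' : Base) (Z Z' : List Base)
    (ht1 : 1 ≤ t) (htt : t < t') (ht' : t' ≤ P.length)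
    (hq : P[t-1]? ≠ some q)
    (heq : P.take (t-1) ++ q :: Z = P.take (t'-1) ++ q' :: Z') : False := by
  have hP : t - 1 < P.length := by omega
  have hlen1 : (P.take (t-1)).length = t - 1 := by
    rw [List.length_take]; omega
  have hlen2 : (P.take (t'-1)).length = t' - 1 := by
    rw [List.length_take]; omega
  have hidx1 : t - 1 < (P.take (t-1) ++ q :: Z).length := by
    simp [hlen1]
  have hidx2 : t - 1 < (P.take (t'-1) ++ q' :: Z').length := by
    simp [hlen2]; omega
  have e0 : (P.take (t-1) ++ q :: Z)[t-1]'hidx1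
      = (P.take (t'-1) ++ q' :: Z')[t-1]'hidx2 := List.getElem_of_eq heq _
  have e1 : (P.take (t-1) ++ q :: Z)[t-1]'hidx1 = q := by
    rw [List.getElem_append_right (by omega)]
    simp [hlen1]
  have e2 : (P.take (t'-1) ++ q' :: Z')[t-1]'hidx2 = P[t-1] := by
    rw [List.getElem_append_left (by omega)]
    exact List.getElem_take ..
  apply hq
  rw [List.getElem?_eq_getElem hP, ← e2, ← e0, e1]

lemma mismatch (P : List Base) (t t' : ℕ) (q q' : Base) (Z Z' : List Base)
    (ht1 : 1 ≤ t) (ht : t ≤ P.length) (ht1' : 1 ≤ t') (ht' : t' ≤ P.length)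
    (hq : P[t-1]? ≠ some q) (hq' : P[t'-1]? ≠ some q')
    (heq : P.take (t-1) ++ q :: Z = P.take (t'-1) ++ q' :: Z') :
    t = t' ∧ q = q' ∧ Z = Z' := by
  rcases lt_trichotomy t t' with h | h | h
  · exact absurd (mismatchAux P t t' q q' Z Z' ht1 h ht' hq heq) (by simp)
  · subst h
    have := List.append_cancel_left heq
    exact ⟨rfl, by injection this, by injection this⟩
  · exact absurd (mismatchAux P t' t q' q Z' Z ht1' h ht hq' heq.symm) (by simp)

lemma charHigh (P : List Base) (n ℓ : ℕ) (hlenP : P.length = n) (h2 : 2 ≤ n)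
    (hℓ : n ≤ ℓ) :
    codeSet P ℓ = ⋃ p ∈ ((Finset.Icc 1 (n-1)) ×ˢ (Finset.univ : Finset Base)).filter
        (fun p => p.2 ≠ Base.G ∧ P[p.1 - 1]? ≠ some p.2),
      (fun Z => P.take (p.1 - 1) ++ p.2 :: Z) '' codeSet P (ℓ - p.1) := by
  ext Z
  simp only [Set.mem_iUnion, Finset.mem_filter, Finset.mem_product, Finset.mem_Icc,
    Finset.mem_univ, true_and, exists_prop]
  constructor
  · rintro ⟨hlen, L, W, h⟩
    cases h with
    | term W hl hW => omega
    | block t q L W Z' ht1 ht2 hq hq2 hrem hZ =>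
      have h1 : (P.take (t-1)).length = t - 1 := by rw [List.length_take]; omega
      have hlen' : Z'.length = ℓ - t := by
        simp [h1] at hlen; omega
      refine ⟨(t, q), ⟨⟨⟨ht1, by omega⟩, trivial⟩, hq, ?_⟩, Z', ⟨hlen', L, W, hZ⟩, rfl⟩
      have hP : t - 1 < P.length := by omega
      rw [List.getElem?_eq_getElem hP]
      intro hc
      injection hc with hc
      exact hq2 hP hc.symm
  · rintro ⟨⟨t, q⟩, hmem, Z', ⟨hlen', L, W, hZ⟩, rfl⟩
    dsimp only at hmem hlen' ⊢
    obtain ⟨⟨⟨ht1, ht2⟩, -⟩, hq, hq'⟩ := hmem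
    have h1 : (P.take (t-1)).length = t - 1 := by rw [List.length_take]; omega
    refine ⟨by simp [h1]; omega, (t, q) :: L, W, ?_⟩
    refine PSFact.block t q L W Z' ht1 (by omega) hq ?_ (by omega) hZ
    intro h hc
    apply hq'
    rw [List.getElem?_eq_getElem h, hc, List.get_eq_getElem]

/-- The number of prefix-synchronized codewords of length `ℓ` is exactly `G_{n,ℓ}`,
where `G_{n,ℓ} = 3^ℓ` for `ℓ < n` and
`G_{n,ℓ} = ∑_{i=1}^{n-1} |P̄_i| G_{n,ℓ-i}` for `ℓ ≥ n`; i.e. the encoding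
`x ↦ CodePSC(P,ℓ,x)` is a bijection from `{0,…,G_{n,ℓ}−1}` onto this set. -/
theorem stmt13 (P : List Base) (n : ℕ) (hlenP : P.length = n) (h2 : 2 ≤ n)
    (hsu : selfUncorr P)
    (hhead : P.head? = some Base.A) (hlast : P.getLast? = some Base.G)
    (G : ℕ → ℕ)
    (hG1 : ∀ ℓ < n, G ℓ = 3 ^ ℓ)
    (hG2 : ∀ ℓ, n ≤ ℓ → G ℓ = ∑ i ∈ Finset.Icc 1 (n - 1),
      (if P[i - 1]? = some Base.G then 3 else 2) * G (ℓ - i)) :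
    ∀ ℓ : ℕ,
      Set.ncard {Z : List Base | Z.length = ℓ ∧ ∃ L W, PSFact P L W Z} = G ℓ := by
  intro ℓ
  induction ℓ using Nat.strong_induction_on with
  | _ ℓ ih =>
  show (codeSet P ℓ).ncard = G ℓ
  by_cases hℓ : ℓ < n
  · rw [charLow P ℓ (by omega), countNoG, hG1 ℓ hℓ]
  · push_neg at hℓ
    have ih' : ∀ m, m < ℓ → (codeSet P m).ncard = G m := ih
    have hinj : ∀ t q, Function.Injective (fun Z => P.take (t - 1) ++ q :: Z : List Base → List Base) := by
      intro t q a b h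
      simp only at h
      have := List.append_cancel_left h
      injection this
    rw [charHigh P n ℓ hlenP h2 hℓ]
    rw [myNcardBiUnion]
    · rw [hG2 ℓ hℓ]
      have step1 : ∀ p ∈ ((Finset.Icc 1 (n-1)) ×ˢ (Finset.univ : Finset Base)).filter
          (fun p => p.2 ≠ Base.G ∧ P[p.1 - 1]? ≠ some p.2),
          ((fun Z => P.take (p.1 - 1) ++ p.2 :: Z) '' codeSet P (ℓ - p.1)).ncard
            = G (ℓ - p.1) := by
        rintro ⟨t, q⟩ hp
        simp only [Finset.mem_filter, Finset.mem_product, Finset.mem_Icc] at hp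
        rw [Set.ncard_image_of_injective _ (hinj t q)]
        exact ih' (ℓ - t) (by omega)
      rw [Finset.sum_congr rfl step1, Finset.sum_filter, Finset.sum_product]
      refine Finset.sum_congr rfl fun t ht => ?_
      rw [Finset.mem_Icc] at ht
      have hP : t - 1 < P.length := by omega
      have hb : P[t-1]? = some (P[t-1]'hP) := List.getElem?_eq_getElem hP
      dsimp only
      simp only [hb]
      rw [← Finset.sum_filter, Finset.sum_const, smul_eq_mul]
      congr 1
      generalize P[t-1]'hP = b
      cases b <;> decide
    · rintro ⟨t, q⟩ hp
      exact (codeSetFinite P (ℓ - t)).image _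
    · rintro ⟨t, q⟩ hp ⟨t', q'⟩ hq' hne
      simp only [Finset.mem_filter, Finset.mem_product, Finset.mem_Icc] at hp hq'
      rw [Set.disjoint_left]
      rintro Z ⟨Z1, _, rfl⟩ ⟨Z2, _, heq⟩
      obtain ⟨h1, h2, h3⟩ := mismatch P t' t q' q Z2 Z1
        (by omega) (by omega) (by omega) (by omega) hq'.2.2 hp.2.2 heq
      exact hne (by simp [h1, h2])
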